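/- If 1/2 < ε_k ≤ 1 for every k ∈ ℕ, then the continuous function f is nowhere monotone on [0,1]: there is no nondegenerate subinterval (a,b) ⊆ [0,1] on which f is monotone. -/

import Mathlib

open Finset

/-- g_{ik}: factors determined by the sequence (ε_k); indices 0-based. -/
noncomputable def gq (ε : ℕ → ℝ) (i : Fin 3) (k : ℕ) : ℝ :=
  if i = 1 then (1 - 2 * ε k) / 3 else (1 + ε k) / 3

/-- δ_{ik}: δ_{0k}=0, δ_{1k}=g_{0k}, δ_{2k}=g_{0k}+g_{1k}. -/
noncomputable def dq (ε : ℕ → ℝ) (i : Fin 3) (k : ℕ) : ℝ :=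
  if i = 0 then 0 else if i = 1 then gq ε 0 k else gq ε 0 k + gq ε 1 k

/-- F((α_k)) = δ_{α_1 1} + Σ_{k≥2} δ_{α_k k} Π_{j=1}^{k-1} g_{α_j j} (0-based indexing). -/
noncomputable def F (ε : ℕ → ℝ) (α : ℕ → Fin 3) : ℝ :=
  ∑' k : ℕ, dq ε (α k) k * ∏ j ∈ Finset.range k, gq ε (α j) j
/-- β_{ik}: β_{0k}=0, β_{1k}=q_{0k}, β_{2k}=q_{0k}+q_{1k}. -/
noncomputable def bq (q : Fin 3 → ℕ → ℝ) (i : Fin 3) (k : ℕ) : ℝ :=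
  if i = 0 then 0 else if i = 1 then q 0 k else q 0 k + q 1 k

/-- The number with Q*_3-digits (α_k): x = β_{α_1 1} + Σ_{k≥2} β_{α_k k} Π_{j=1}^{k-1} q_{α_j j}. -/
noncomputable def Xval (q : Fin 3 → ℕ → ℝ) (α : ℕ → Fin 3) : ℝ :=
  ∑' k : ℕ, bq q (α k) k * ∏ j ∈ Finset.range k, q (α j) j

set_option maxRecDepth 8000

namespace NM12

/-! ### Generic tail machinery -/

noncomputable def TT (c w : Fin 3 → ℕ → ℝ) (γ : ℕ → Fin 3) (n : ℕ) : ℝ :=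
  ∑' k : ℕ, c (γ (n + k)) (n + k) * ∏ j ∈ Finset.range k, w (γ (n + j)) (n + j)

noncomputable def SS (c w : Fin 3 → ℕ → ℝ) (γ : ℕ → Fin 3) (n : ℕ) : ℝ :=
  ∑ k ∈ Finset.range n, c (γ k) k * ∏ j ∈ Finset.range k, w (γ j) j

noncomputable def PP (w : Fin 3 → ℕ → ℝ) (γ : ℕ → Fin 3) (n : ℕ) : ℝ :=
  ∏ j ∈ Finset.range n, w (γ j) j

section Generic
variable (c w : Fin 3 → ℕ → ℝ) (γ : ℕ → Fin 3)

lemma prod_shift (w : Fin 3 → ℕ → ℝ) (γ : ℕ → Fin 3) (n k : ℕ) :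
    ∏ j ∈ Finset.range (k + 1), w (γ (n + j)) (n + j)
    = w (γ n) n * ∏ j ∈ Finset.range k, w (γ (n + 1 + j)) (n + 1 + j) := by
  rw [Finset.prod_range_succ', add_zero, mul_comm]
  congr 1
  apply Finset.prod_congr rfl
  intro x _
  rw [show n + (x + 1) = n + 1 + x from by omega]

lemma tail_rec {n : ℕ}
    (hs' : Summable (fun k => c (γ (n + k)) (n + k) *
      ∏ j ∈ Finset.range k, w (γ (n + j)) (n + j))) :
    TT c w γ n = c (γ n) n + w (γ n) n * TT c w γ (n + 1) := by
  unfold TT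
  rw [Summable.tsum_eq_zero_add hs']
  simp only [add_zero, Finset.prod_range_zero, mul_one]
  congr 1
  have h1 : ∀ k : ℕ,
      c (γ (n + (k + 1))) (n + (k + 1)) * ∏ j ∈ Finset.range (k + 1), w (γ (n + j)) (n + j)
      = w (γ n) n * (c (γ (n + 1 + k)) (n + 1 + k) *
          ∏ j ∈ Finset.range k, w (γ (n + 1 + j)) (n + 1 + j)) := by
    intro k
    rw [prod_shift, show n + (k + 1) = n + 1 + k from by omega]
    ring
  rw [tsum_congr h1, tsum_mul_left]

lemma SS_succ (n : ℕ) : SS c w γ (n + 1) = SS c w γ n + c (γ n) n * PP w γ n := by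
  simp [SS, PP, Finset.sum_range_succ]

lemma PP_succ (n : ℕ) : PP w γ (n + 1) = PP w γ n * w (γ n) n := by
  simp [PP, Finset.prod_range_succ]

lemma tail_decomp (n : ℕ)
    (hs : ∀ m : ℕ, Summable (fun k => c (γ (m + k)) (m + k) *
      ∏ j ∈ Finset.range k, w (γ (m + j)) (m + j))) :
    TT c w γ 0 = SS c w γ n + PP w γ n * TT c w γ n := by
  induction n with
  | zero => simp [SS, PP]
  | succ n ih =>
    rw [ih, tail_rec c w γ (hs n), SS_succ, PP_succ]
    ring

lemma SS_congr {γ' : ℕ → Fin 3} (n : ℕ) (h : ∀ j < n, γ' j = γ j) :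
    SS c w γ' n = SS c w γ n := by
  unfold SS
  apply Finset.sum_congr rfl
  intro k hk
  rw [Finset.mem_range] at hk
  rw [h k hk]
  congr 1
  exact Finset.prod_congr rfl fun j hj => by rw [h j (lt_trans (Finset.mem_range.1 hj) hk)]

lemma PP_congr (w : Fin 3 → ℕ → ℝ) {γ γ' : ℕ → Fin 3} (n : ℕ) (h : ∀ j < n, γ' j = γ j) :
    PP w γ' n = PP w γ n :=
  Finset.prod_congr rfl fun j hj => by rw [h j (Finset.mem_range.1 hj)]

end Generic

section Chunk2
variable {q : Fin 3 → ℕ → ℝ} {ε : ℕ → ℝ}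

lemma fin3 (i : Fin 3) : i = 0 ∨ i = 1 ∨ i = 2 := by fin_cases i <;> simp

/-! ### basic digit facts -/

lemma q_lt_one (hq : ∀ i k, 0 < q i k) (hsum : ∀ k, q 0 k + q 1 k + q 2 k = 1)
    (i : Fin 3) (k : ℕ) : q i k < 1 := by
  have h0 := hq 0 k; have h1 := hq 1 k; have h2 := hq 2 k; have hs := hsum k
  rcases fin3 i with rfl | rfl | rfl <;> linarith

lemma bq_nonneg (hq : ∀ i k, 0 < q i k) (i : Fin 3) (k : ℕ) : 0 ≤ bq q i k := by
  have h0 := hq 0 k; have h1 := hq 1 k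
  rcases fin3 i with rfl | rfl | rfl <;> simp [bq] <;> linarith

lemma bq_le (hq : ∀ i k, 0 < q i k) (hsum : ∀ k, q 0 k + q 1 k + q 2 k = 1)
    (i : Fin 3) (k : ℕ) : bq q i k ≤ 1 - q i k := by
  have h0 := hq 0 k; have h1 := hq 1 k; have h2 := hq 2 k; have hs := hsum k
  rcases fin3 i with rfl | rfl | rfl <;> simp [bq] <;> linarith

lemma g0_val (k : ℕ) : gq ε 0 k = (1 + ε k) / 3 := by simp [gq]
lemma g1_val (k : ℕ) : gq ε 1 k = (1 - 2 * ε k) / 3 := by simp [gq]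
lemma g2_val (k : ℕ) : gq ε 2 k = (1 + ε k) / 3 := by simp [gq]

lemma g0_pos (hε : ∀ k, 1 / 2 < ε k ∧ ε k ≤ 1) (k : ℕ) : 0 < gq ε 0 k := by
  have := (hε k).1; rw [g0_val]; linarith

lemma g0_le (hε : ∀ k, 1 / 2 < ε k ∧ ε k ≤ 1) (k : ℕ) : gq ε 0 k ≤ 2 / 3 := by
  have := (hε k).2; rw [g0_val]; linarith

lemma g1_neg (hε : ∀ k, 1 / 2 < ε k ∧ ε k ≤ 1) (k : ℕ) : gq ε 1 k < 0 := by
  have := (hε k).1; rw [g1_val]; linarith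

lemma g1_ge (hε : ∀ k, 1 / 2 < ε k ∧ ε k ≤ 1) (k : ℕ) : -(1/3) ≤ gq ε 1 k := by
  have := (hε k).2; rw [g1_val]; linarith

lemma g2_pos (hε : ∀ k, 1 / 2 < ε k ∧ ε k ≤ 1) (k : ℕ) : 0 < gq ε 2 k := by
  have := (hε k).1; rw [g2_val]; linarith

lemma gsum (k : ℕ) : gq ε 0 k + gq ε 1 k + gq ε 2 k = 1 := by
  simp [gq]; ring

lemma gq_abs (hε : ∀ k, 1 / 2 < ε k ∧ ε k ≤ 1) (i : Fin 3) (k : ℕ) :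
    |gq ε i k| ≤ 2 / 3 := by
  have h1 := (hε k).1; have h2 := (hε k).2
  rcases fin3 i with rfl | rfl | rfl <;>
    [rw [g0_val]; rw [g1_val]; rw [g2_val]] <;> rw [abs_le] <;> constructor <;> linarith

lemma gq_ne_zero (hε : ∀ k, 1 / 2 < ε k ∧ ε k ≤ 1) (i : Fin 3) (k : ℕ) :
    gq ε i k ≠ 0 := by
  rcases fin3 i with rfl | rfl | rfl
  · exact (g0_pos hε k).ne'
  · exact (g1_neg hε k).ne
  · exact (g2_pos hε k).ne'

lemma dq_nonneg (hε : ∀ k, 1 / 2 < ε k ∧ ε k ≤ 1) (i : Fin 3) (k : ℕ) :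
    0 ≤ dq ε i k := by
  have h1 := (hε k).1; have h2 := (hε k).2
  rcases fin3 i with rfl | rfl | rfl <;> simp [dq, gq] <;> linarith

lemma dq0_val (k : ℕ) : dq ε 0 k = 0 := by simp [dq]
lemma dq1_val (k : ℕ) : dq ε 1 k = gq ε 0 k := by simp [dq]
lemma dq2_val (k : ℕ) : dq ε 2 k = gq ε 0 k + gq ε 1 k := by simp [dq]
lemma bq0_val (k : ℕ) : bq q 0 k = 0 := by simp [bq]
lemma bq1_val (k : ℕ) : bq q 1 k = q 0 k := by simp [bq]
lemma bq2_val (k : ℕ) : bq q 2 k = q 0 k + q 1 k := by simp [bq]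

lemma dq_abs (hε : ∀ k, 1 / 2 < ε k ∧ ε k ≤ 1) (i : Fin 3) (k : ℕ) :
    |dq ε i k| ≤ 2 / 3 := by
  have h1 := (hε k).1; have h2 := (hε k).2
  rcases fin3 i with rfl | rfl | rfl
  · norm_num [dq0_val]
  · rw [dq1_val, g0_val, abs_le]; constructor <;> linarith
  · rw [dq2_val, g0_val, g1_val, abs_le]; constructor <;> linarith

/-! ### X-side -/

lemma Xpartial (hq : ∀ i k, 0 < q i k) (hsum : ∀ k, q 0 k + q 1 k + q 2 k = 1)
    (γ : ℕ → Fin 3) (n m : ℕ) :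
    ∑ k ∈ Finset.range m, bq q (γ (n + k)) (n + k) *
        ∏ j ∈ Finset.range k, q (γ (n + j)) (n + j) ≤ 1 := by
  have key : ∀ m : ℕ, ∑ k ∈ Finset.range m, bq q (γ (n + k)) (n + k) *
      ∏ j ∈ Finset.range k, q (γ (n + j)) (n + j)
      ≤ 1 - ∏ j ∈ Finset.range m, q (γ (n + j)) (n + j) := by
    intro m
    induction m with
    | zero => simp
    | succ m ih =>
      rw [Finset.sum_range_succ, Finset.prod_range_succ]
      have hb := bq_le hq hsum (γ (n + m)) (n + m)
      have hp : (0:ℝ) ≤ ∏ j ∈ Finset.range m, q (γ (n + j)) (n + j) :=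
        Finset.prod_nonneg fun j _ => (hq _ _).le
      nlinarith [mul_le_mul_of_nonneg_right hb hp]
  have hp : (0:ℝ) ≤ ∏ j ∈ Finset.range m, q (γ (n + j)) (n + j) :=
    Finset.prod_nonneg fun j _ => (hq _ _).le
  linarith [key m]

lemma Xsummable (hq : ∀ i k, 0 < q i k) (hsum : ∀ k, q 0 k + q 1 k + q 2 k = 1)
    (γ : ℕ → Fin 3) (n : ℕ) :
    Summable (fun k => bq q (γ (n + k)) (n + k) *
      ∏ j ∈ Finset.range k, q (γ (n + j)) (n + j)) :=
  summable_of_sum_range_le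
    (fun k => mul_nonneg (bq_nonneg hq _ _) (Finset.prod_nonneg fun j _ => (hq _ _).le))
    (Xpartial hq hsum γ n)

lemma XT_nonneg (hq : ∀ i k, 0 < q i k) (γ : ℕ → Fin 3) (n : ℕ) :
    0 ≤ TT (bq q) q γ n :=
  tsum_nonneg fun k => mul_nonneg (bq_nonneg hq _ _)
    (Finset.prod_nonneg fun j _ => (hq _ _).le)

lemma XT_le_one (hq : ∀ i k, 0 < q i k) (hsum : ∀ k, q 0 k + q 1 k + q 2 k = 1)
    (γ : ℕ → Fin 3) (n : ℕ) : TT (bq q) q γ n ≤ 1 :=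
  Real.tsum_le_of_sum_range_le
    (fun k => mul_nonneg (bq_nonneg hq _ _) (Finset.prod_nonneg fun j _ => (hq _ _).le))
    (Xpartial hq hsum γ n)

lemma XT_rec (hq : ∀ i k, 0 < q i k) (hsum : ∀ k, q 0 k + q 1 k + q 2 k = 1)
    (γ : ℕ → Fin 3) (n : ℕ) :
    TT (bq q) q γ n = bq q (γ n) n + q (γ n) n * TT (bq q) q γ (n + 1) :=
  tail_rec _ _ _ (Xsummable hq hsum γ n)

lemma Xval_eq_TT (γ : ℕ → Fin 3) : Xval q γ = TT (bq q) q γ 0 := by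
  simp [Xval, TT]

lemma Xval_decomp (hq : ∀ i k, 0 < q i k) (hsum : ∀ k, q 0 k + q 1 k + q 2 k = 1)
    (γ : ℕ → Fin 3) (n : ℕ) :
    Xval q γ = SS (bq q) q γ n + PP q γ n * TT (bq q) q γ n := by
  rw [Xval_eq_TT]; exact tail_decomp _ _ _ n (Xsummable hq hsum γ)

lemma XL_pos (hq : ∀ i k, 0 < q i k) (γ : ℕ → Fin 3) (n : ℕ) : 0 < PP q γ n :=
  Finset.prod_pos fun j _ => hq _ _

/-! ### F-side -/

lemma gprod_abs (hε : ∀ k, 1 / 2 < ε k ∧ ε k ≤ 1) (γ : ℕ → Fin 3) (n k : ℕ) :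
    |∏ j ∈ Finset.range k, gq ε (γ (n + j)) (n + j)| ≤ (2/3) ^ k := by
  rw [Finset.abs_prod]
  calc ∏ j ∈ Finset.range k, |gq ε (γ (n + j)) (n + j)|
        ≤ ∏ _j ∈ Finset.range k, (2/3 : ℝ) :=
        Finset.prod_le_prod (fun j _ => abs_nonneg _) (fun j _ => gq_abs hε _ _)
    _ = (2/3) ^ k := by rw [Finset.prod_const, Finset.card_range]

lemma Fterm_abs (hε : ∀ k, 1 / 2 < ε k ∧ ε k ≤ 1) (γ : ℕ → Fin 3) (n k : ℕ) :
    |dq ε (γ (n + k)) (n + k) * ∏ j ∈ Finset.range k, gq ε (γ (n + j)) (n + j)|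
      ≤ (2/3 : ℝ) * (2/3) ^ k := by
  rw [abs_mul]
  exact mul_le_mul (dq_abs hε _ _) (gprod_abs hε γ n k) (abs_nonneg _) (by norm_num)

lemma FP_abs (hε : ∀ k, 1 / 2 < ε k ∧ ε k ≤ 1) (γ : ℕ → Fin 3) (n : ℕ) :
    |PP (gq ε) γ n| ≤ (2/3) ^ n := by
  unfold PP
  rw [Finset.abs_prod]
  calc ∏ j ∈ Finset.range n, |gq ε (γ j) j|
        ≤ ∏ _j ∈ Finset.range n, (2/3 : ℝ) :=
        Finset.prod_le_prod (fun j _ => abs_nonneg _) (fun j _ => gq_abs hε _ _)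
    _ = (2/3) ^ n := by rw [Finset.prod_const, Finset.card_range]

lemma FP_ne_zero (hε : ∀ k, 1 / 2 < ε k ∧ ε k ≤ 1) (γ : ℕ → Fin 3) (n : ℕ) :
    PP (gq ε) γ n ≠ 0 :=
  Finset.prod_ne_zero_iff.2 fun j _ => gq_ne_zero hε _ _

lemma geo_summable : Summable (fun k : ℕ => (2/3 : ℝ) * (2/3) ^ k) :=
  (summable_geometric_of_lt_one (by norm_num) (by norm_num)).mul_left _

lemma Fsummable (hε : ∀ k, 1 / 2 < ε k ∧ ε k ≤ 1) (γ : ℕ → Fin 3) (n : ℕ) :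
    Summable (fun k => dq ε (γ (n + k)) (n + k) *
      ∏ j ∈ Finset.range k, gq ε (γ (n + j)) (n + j)) :=
  Summable.of_abs (Summable.of_nonneg_of_le (fun k => abs_nonneg _)
    (fun k => Fterm_abs hε γ n k) geo_summable)

lemma FT_abs_le (hε : ∀ k, 1 / 2 < ε k ∧ ε k ≤ 1) (γ : ℕ → Fin 3) (n : ℕ) :
    |TT (dq ε) (gq ε) γ n| ≤ 2 := by
  have hsum2 : ∑' k : ℕ, (2/3 : ℝ) * (2/3) ^ k = 2 := by
    rw [tsum_mul_left, tsum_geometric_of_lt_one (by norm_num) (by norm_num)]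
    norm_num
  have habs : |TT (dq ε) (gq ε) γ n| ≤ ∑' k : ℕ, (2/3 : ℝ) * (2/3) ^ k := by
    unfold TT
    rw [abs_le]
    constructor
    · have := Summable.tsum_le_tsum (f := fun k => -((2/3 : ℝ) * (2/3)^k))
        (fun k => neg_le_of_abs_le (Fterm_abs hε γ n k)) geo_summable.neg
        (Fsummable hε γ n)
      rw [tsum_neg] at this
      linarith
    · exact Summable.tsum_le_tsum (fun k => le_of_abs_le (Fterm_abs hε γ n k))
        (Fsummable hε γ n) geo_summable
  linarith [hsum2.le]

lemma FT_rec (hε : ∀ k, 1 / 2 < ε k ∧ ε k ≤ 1) (γ : ℕ → Fin 3) (n : ℕ) :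
    TT (dq ε) (gq ε) γ n = dq ε (γ n) n + gq ε (γ n) n * TT (dq ε) (gq ε) γ (n + 1) :=
  tail_rec _ _ _ (Fsummable hε γ n)

lemma F_eq_TT (γ : ℕ → Fin 3) : F ε γ = TT (dq ε) (gq ε) γ 0 := by
  simp [F, TT]

lemma F_decomp (hε : ∀ k, 1 / 2 < ε k ∧ ε k ≤ 1) (γ : ℕ → Fin 3) (n : ℕ) :
    F ε γ = SS (dq ε) (gq ε) γ n + PP (gq ε) γ n * TT (dq ε) (gq ε) γ n := by
  rw [F_eq_TT]; exact tail_decomp _ _ _ n (Fsummable hε γ)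

end Chunk2

section Chunk3
variable {q : Fin 3 → ℕ → ℝ} {ε : ℕ → ℝ}

lemma limitz {x : ℝ} (h : ∀ m : ℕ, x ≤ 2 * (2/3) ^ m) : x ≤ 0 := by
  by_contra hc
  push_neg at hc
  obtain ⟨m, hm⟩ := exists_pow_lt_of_lt_one (show (0:ℝ) < x / 2 by linarith)
    (show (2/3 : ℝ) < 1 by norm_num)
  have := h m
  linarith

lemma FT_mem_aux (hε : ∀ k, 1 / 2 < ε k ∧ ε k ≤ 1) (γ : ℕ → Fin 3) :
    ∀ (m n : ℕ), -(2*(2/3:ℝ)^m) ≤ TT (dq ε) (gq ε) γ n ∧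
      TT (dq ε) (gq ε) γ n ≤ 1 + 2*(2/3:ℝ)^m := by
  intro m
  induction m with
  | zero =>
    intro n
    have h := FT_abs_le hε γ n
    rw [abs_le] at h
    norm_num
    constructor <;> linarith [h.1, h.2]
  | succ m ih =>
    intro n
    obtain ⟨h1, h2⟩ := ih (n+1)
    rw [FT_rec hε γ n]
    set T := TT (dq ε) (gq ε) γ (n+1) with hT
    have hc : (0:ℝ) ≤ (2/3:ℝ)^m := by positivity
    have he1 := (hε n).1; have he2 := (hε n).2
    have hp1 : (2/3:ℝ)^(m+1) = (2/3) * (2/3)^m := by ring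
    rcases fin3 (γ n) with h|h|h <;>
      rw [h] <;>
      simp only [dq0_val, dq1_val, dq2_val, g0_val, g1_val, g2_val, hp1]
    · have hg0 : (0:ℝ) ≤ (1 + ε n)/3 := by linarith
      have hgu : (1 + ε n)/3 ≤ 2/3 := by linarith
      constructor <;>
        nlinarith [mul_le_mul_of_nonneg_left h1 hg0, mul_le_mul_of_nonneg_left h2 hg0,
          mul_le_mul_of_nonneg_right hgu (show (0:ℝ) ≤ 1 + 2*(2/3)^m by linarith),
          mul_le_mul_of_nonneg_right hgu (show (0:ℝ) ≤ 2*(2/3)^m by linarith)]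
    · have hg1 : (1 - 2*ε n)/3 ≤ 0 := by linarith
      have hg1' : -(1/3) ≤ (1 - 2*ε n)/3 := by linarith
      constructor <;>
        nlinarith [mul_le_mul_of_nonpos_left h1 hg1, mul_le_mul_of_nonpos_left h2 hg1,
          mul_le_mul_of_nonneg_right (show -(1/3) ≤ (1-2*ε n)/3 from hg1')
            (show (0:ℝ) ≤ 1 + 2*(2/3)^m by linarith),
          mul_le_mul_of_nonneg_right (show -(1/3) ≤ (1-2*ε n)/3 from hg1')
            (show (0:ℝ) ≤ 2*(2/3)^m by linarith)]
    · have hg0 : (0:ℝ) ≤ (1 + ε n)/3 := by linarith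
      have hgu : (1 + ε n)/3 ≤ 2/3 := by linarith
      constructor <;>
        nlinarith [mul_le_mul_of_nonneg_left h1 hg0, mul_le_mul_of_nonneg_left h2 hg0,
          mul_le_mul_of_nonneg_right hgu (show (0:ℝ) ≤ 1 + 2*(2/3)^m by linarith),
          mul_le_mul_of_nonneg_right hgu (show (0:ℝ) ≤ 2*(2/3)^m by linarith)]

lemma FT_nonneg (hε : ∀ k, 1 / 2 < ε k ∧ ε k ≤ 1) (γ : ℕ → Fin 3) (n : ℕ) :
    0 ≤ TT (dq ε) (gq ε) γ n := by
  have h : ∀ m : ℕ, -TT (dq ε) (gq ε) γ n ≤ 2 * (2/3) ^ m := by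
    intro m
    have := (FT_mem_aux hε γ m n).1
    linarith
  linarith [limitz h]

lemma FT_le_one (hε : ∀ k, 1 / 2 < ε k ∧ ε k ≤ 1) (γ : ℕ → Fin 3) (n : ℕ) :
    TT (dq ε) (gq ε) γ n ≤ 1 := by
  have h : ∀ m : ℕ, TT (dq ε) (gq ε) γ n - 1 ≤ 2 * (2/3) ^ m := by
    intro m
    have := (FT_mem_aux hε γ m n).2
    linarith
  linarith [limitz h]

/-! ### digit forcing -/

lemma XT_zero_digits (hq : ∀ i k, 0 < q i k) (hsum : ∀ k, q 0 k + q 1 k + q 2 k = 1)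
    (γ : ℕ → Fin 3) (n : ℕ) (h : TT (bq q) q γ n = 0) :
    ∀ m, n ≤ m → γ m = 0 := by
  have key : ∀ k : ℕ, TT (bq q) q γ (n + k) = 0 ∧ γ (n + k) = 0 := by
    intro k
    induction k with
    | zero =>
      rw [add_zero]
      refine ⟨h, ?_⟩
      have hrec := XT_rec hq hsum γ n
      rw [h] at hrec
      have hb := bq_nonneg hq (γ n) n
      have ht := XT_nonneg hq γ (n+1)
      have hqp := hq (γ n) n
      have hb0 : bq q (γ n) n = 0 := by nlinarith
      rcases fin3 (γ n) with hh|hh|hh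
      · exact hh
      · rw [hh, bq1_val] at hb0; exact absurd hb0 (hq 0 n).ne'
      · rw [hh, bq2_val] at hb0
        exact absurd hb0 (by nlinarith [hq 0 n, hq 1 n])
    | succ k ih =>
      obtain ⟨ht0, hd0⟩ := ih
      have hrec := XT_rec hq hsum γ (n + k)
      rw [ht0, hd0, bq0_val] at hrec
      have ht1 : TT (bq q) q γ (n + k + 1) = 0 := by
        have hqp := hq 0 (n+k)
        have ht := XT_nonneg hq γ (n + k + 1)
        nlinarith
      have h2 : TT (bq q) q γ (n + (k+1)) = 0 := by
        rw [show n + (k+1) = n + k + 1 from by omega]; exact ht1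
      refine ⟨h2, ?_⟩
      have hrec2 := XT_rec hq hsum γ (n + (k+1))
      rw [h2] at hrec2
      have hb := bq_nonneg hq (γ (n + (k+1))) (n + (k+1))
      have ht := XT_nonneg hq γ (n + (k+1) + 1)
      have hqp := hq (γ (n + (k+1))) (n + (k+1))
      have hb0 : bq q (γ (n + (k+1))) (n + (k+1)) = 0 := by nlinarith
      rcases fin3 (γ (n + (k+1))) with hh|hh|hh
      · exact hh
      · rw [hh, bq1_val] at hb0; exact absurd hb0 (hq 0 _).ne'
      · rw [hh, bq2_val] at hb0
        exact absurd hb0 (by nlinarith [hq 0 (n+(k+1)), hq 1 (n+(k+1))])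
  intro m hm
  have := (key (m - n)).2
  rwa [show n + (m - n) = m from by omega] at this

lemma XT_one_digits (hq : ∀ i k, 0 < q i k) (hsum : ∀ k, q 0 k + q 1 k + q 2 k = 1)
    (γ : ℕ → Fin 3) (n : ℕ) (h : TT (bq q) q γ n = 1) :
    ∀ m, n ≤ m → γ m = 2 := by
  have step : ∀ p : ℕ, TT (bq q) q γ p = 1 → γ p = 2 ∧ TT (bq q) q γ (p+1) = 1 := by
    intro p hp
    have hrec := XT_rec hq hsum γ p
    rw [hp] at hrec
    have ht1 := XT_le_one hq hsum γ (p+1)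
    have ht0 := XT_nonneg hq γ (p+1)
    have h0 := hq 0 p; have h1 := hq 1 p; have h2 := hq 2 p; have hs := hsum p
    have hd : γ p = 2 := by
      rcases fin3 (γ p) with hh|hh|hh
      · rw [hh, bq0_val] at hrec
        exfalso; nlinarith
      · rw [hh, bq1_val] at hrec
        exfalso; nlinarith
      · exact hh
    refine ⟨hd, ?_⟩
    rw [hd, bq2_val] at hrec
    nlinarith
  have key : ∀ k : ℕ, γ (n + k) = 2 ∧ TT (bq q) q γ (n + k + 1) = 1 := by
    intro k
    induction k with
    | zero => rw [add_zero]; exact step n h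
    | succ k ih =>
      have := step (n + k + 1) ih.2
      rwa [show n + (k+1) = n + k + 1 from by omega]
  intro m hm
  have := (key (m - n)).1
  rwa [show n + (m - n) = m from by omega] at this

lemma FT_zero_of_digits (hε : ∀ k, 1 / 2 < ε k ∧ ε k ≤ 1) (γ : ℕ → Fin 3) (n : ℕ)
    (h : ∀ m, n ≤ m → γ m = 0) : TT (dq ε) (gq ε) γ n = 0 := by
  unfold TT
  have : ∀ k : ℕ, dq ε (γ (n + k)) (n + k) *
      ∏ j ∈ Finset.range k, gq ε (γ (n + j)) (n + j) = 0 := by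
    intro k
    rw [h (n + k) (by omega), dq0_val, zero_mul]
  rw [tsum_congr this, tsum_zero]

lemma FT_one_of_digits (hε : ∀ k, 1 / 2 < ε k ∧ ε k ≤ 1) (γ : ℕ → Fin 3) (n : ℕ)
    (h : ∀ m, n ≤ m → γ m = 2) : TT (dq ε) (gq ε) γ n = 1 := by
  have key : ∀ (k p : ℕ), (∀ m, p ≤ m → γ m = 2) →
      |1 - TT (dq ε) (gq ε) γ p| ≤ (2/3 : ℝ) ^ k := by
    intro k
    induction k with
    | zero =>
      intro p _
      have h0 := FT_nonneg hε γ p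
      have h1 := FT_le_one hε γ p
      rw [pow_zero, abs_le]
      constructor <;> linarith
    | succ k ih =>
      intro p hp
      have hrec := FT_rec hε γ p
      rw [hp p le_rfl, dq2_val] at hrec
      have hih := ih (p+1) (fun m hm => hp m (by omega))
      have hgs := gsum (ε := ε) p
      have habs := gq_abs hε 2 p
      have : 1 - TT (dq ε) (gq ε) γ p
          = gq ε 2 p * (1 - TT (dq ε) (gq ε) γ (p+1)) := by
        rw [hrec]; ring_nf; nlinarith [hgs]
      rw [this, abs_mul, pow_succ]
      rw [mul_comm ((2/3:ℝ)^k) (2/3)]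
      exact mul_le_mul habs hih (abs_nonneg _) (by norm_num)
  have hb : ∀ k : ℕ, |1 - TT (dq ε) (gq ε) γ n| ≤ (2/3:ℝ)^k := fun k => key k n h
  have : |1 - TT (dq ε) (gq ε) γ n| ≤ 0 := by
    apply limitz (x := |1 - TT (dq ε) (gq ε) γ n|)
    intro m
    have := hb m
    have hc : (0:ℝ) ≤ (2/3:ℝ)^m := by positivity
    linarith
  have h0 : |1 - TT (dq ε) (gq ε) γ n| = 0 := le_antisymm this (abs_nonneg _)
  linarith [abs_eq_zero.mp h0]
end Chunk3

section Chunk4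
variable {q : Fin 3 → ℕ → ℝ} {ε : ℕ → ℝ}

lemma XA_succ_ge (hq : ∀ i k, 0 < q i k) (γ : ℕ → Fin 3) (n : ℕ) :
    SS (bq q) q γ n ≤ SS (bq q) q γ (n + 1) := by
  rw [SS_succ]
  nlinarith [mul_nonneg (bq_nonneg hq (γ n) n) (XL_pos hq γ n).le]

lemma XB_succ_le (hq : ∀ i k, 0 < q i k) (hsum : ∀ k, q 0 k + q 1 k + q 2 k = 1)
    (γ : ℕ → Fin 3) (n : ℕ) :
    SS (bq q) q γ (n + 1) + PP q γ (n + 1) ≤ SS (bq q) q γ n + PP q γ n := by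
  rw [SS_succ, PP_succ]
  have h1 := bq_le hq hsum (γ n) n
  have h2 := (XL_pos hq γ n).le
  nlinarith [mul_le_mul_of_nonneg_left (show bq q (γ n) n + q (γ n) n ≤ 1 by linarith) h2]

lemma XA_mono (hq : ∀ i k, 0 < q i k) (γ : ℕ → Fin 3) :
    Monotone (fun n => SS (bq q) q γ n) :=
  monotone_nat_of_le_succ fun n => XA_succ_ge hq γ n

lemma XB_anti (hq : ∀ i k, 0 < q i k) (hsum : ∀ k, q 0 k + q 1 k + q 2 k = 1)
    (γ : ℕ → Fin 3) :
    Antitone (fun n => SS (bq q) q γ n + PP q γ n) :=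
  antitone_nat_of_succ_le fun n => XB_succ_le hq hsum γ n

lemma XA_zero (γ : ℕ → Fin 3) : SS (bq q) q γ 0 = 0 := by simp [SS]
lemma XP_zero (γ : ℕ → Fin 3) : PP q γ 0 = 1 := by simp [PP]

lemma XA_nonneg (hq : ∀ i k, 0 < q i k) (γ : ℕ → Fin 3) (n : ℕ) :
    0 ≤ SS (bq q) q γ n := by
  have := XA_mono hq γ (Nat.zero_le n)
  simpa [XA_zero] using this

lemma XB_le_one (hq : ∀ i k, 0 < q i k) (hsum : ∀ k, q 0 k + q 1 k + q 2 k = 1)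
    (γ : ℕ → Fin 3) (n : ℕ) :
    SS (bq q) q γ n + PP q γ n ≤ 1 := by
  have := XB_anti hq hsum γ (Nat.zero_le n)
  simpa [XA_zero, XP_zero] using this

lemma mem_cyl (hq : ∀ i k, 0 < q i k) (hsum : ∀ k, q 0 k + q 1 k + q 2 k = 1)
    (γ : ℕ → Fin 3) (n : ℕ) :
    SS (bq q) q γ n ≤ Xval q γ ∧ Xval q γ ≤ SS (bq q) q γ n + PP q γ n := by
  rw [Xval_decomp hq hsum γ n]
  have h0 := XT_nonneg hq γ n
  have h1 := XT_le_one hq hsum γ n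
  have hP := XL_pos hq γ n
  constructor
  · nlinarith [mul_nonneg hP.le h0]
  · nlinarith [mul_le_mul_of_nonneg_left h1 hP.le]

/-! ### separation -/

lemma sep (hq : ∀ i k, 0 < q i k) (hsum : ∀ k, q 0 k + q 1 k + q 2 k = 1)
    (β γ : ℕ → Fin 3) :
    ∀ n, SS (bq q) q β n < Xval q γ →
      Xval q γ < SS (bq q) q β n + PP q β n →
      ∀ j, j < n → γ j = β j := by
  intro n
  induction n with
  | zero => intro _ _ j hj; omega
  | succ n ih =>
    intro h1 h2
    have hPP := XL_pos hq β n
    have hbq := bq_nonneg hq (β n) n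
    have hble := bq_le hq hsum (β n) n
    have hss := SS_succ (bq q) q β n
    have hpp := PP_succ q β n
    have hagree : ∀ j, j < n → γ j = β j := by
      apply ih
      · rw [hss] at h1
        nlinarith [mul_nonneg hbq hPP.le]
      · rw [hss, hpp] at h2
        nlinarith [mul_le_mul_of_nonneg_left
          (show bq q (β n) n + q (β n) n ≤ 1 by linarith) hPP.le]
    have hxd := Xval_decomp hq hsum γ n
    rw [SS_congr (bq q) q β n hagree, PP_congr q n hagree, XT_rec hq hsum γ n] at hxd
    rw [hss, hxd] at h1
    rw [hss, hpp, hxd] at h2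
    have ht'0 := XT_nonneg hq γ (n + 1)
    have ht'1 := XT_le_one hq hsum γ (n + 1)
    have hlow : bq q (β n) n < bq q (γ n) n + q (γ n) n * TT (bq q) q γ (n+1) := by
      have hlt : bq q (β n) n * PP q β n <
          PP q β n * (bq q (γ n) n + q (γ n) n * TT (bq q) q γ (n+1)) := by linarith
      rw [mul_comm (bq q (β n) n) (PP q β n)] at hlt
      exact lt_of_mul_lt_mul_left hlt hPP.le
    have hhigh : bq q (γ n) n + q (γ n) n * TT (bq q) q γ (n+1)
        < bq q (β n) n + q (β n) n := by
      have hlt : PP q β n * (bq q (γ n) n + q (γ n) n * TT (bq q) q γ (n+1))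
          < (bq q (β n) n + q (β n) n) * PP q β n := by linarith
      rw [mul_comm (bq q (β n) n + q (β n) n) (PP q β n)] at hlt
      exact lt_of_mul_lt_mul_left hlt hPP.le
    intro j hj
    rcases Nat.lt_succ_iff_lt_or_eq.mp hj with hj' | rfl
    · exact hagree j hj'
    · rcases fin3 (γ j) with hg|hg|hg <;> rcases fin3 (β j) with hbm|hbm|hbm <;>
        simp only [hg, hbm, bq0_val, bq1_val, bq2_val] at hlow hhigh ⊢ <;>
        exfalso <;>
        nlinarith [mul_le_mul_of_nonneg_left ht'1 (hq 0 j).le,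
          mul_le_mul_of_nonneg_left ht'1 (hq 1 j).le,
          mul_le_mul_of_nonneg_left ht'1 (hq 2 j).le,
          mul_nonneg (hq 0 j).le ht'0, mul_nonneg (hq 1 j).le ht'0,
          mul_nonneg (hq 2 j).le ht'0,
          hq 0 j, hq 1 j, hq 2 j, hsum j]

/-! ### shrinking -/

lemma shrink (hq : ∀ i k, 0 < q i k) (hsum : ∀ k, q 0 k + q 1 k + q 2 k = 1)
    {α : ℝ → ℕ → Fin 3} (hα : ∀ x ∈ Set.Icc (0 : ℝ) 1, Xval q (α x) = x)
    (γ : ℕ → Fin 3) :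
    Filter.Tendsto (fun n => PP q γ n) Filter.atTop (nhds 0) := by
  have hant : Antitone (fun n => PP q γ n) := by
    apply antitone_nat_of_succ_le
    intro n
    rw [PP_succ]
    exact mul_le_of_le_one_right (XL_pos hq γ n).le (q_lt_one hq hsum (γ n) n).le
  have hbdd : BddBelow (Set.range fun n => PP q γ n) :=
    ⟨0, by rintro y ⟨n, rfl⟩; exact (XL_pos hq γ n).le⟩
  have htend : Filter.Tendsto (fun n => PP q γ n) Filter.atTop
      (nhds (⨅ n, PP q γ n)) := tendsto_atTop_ciInf hant hbdd
  have hl0 : 0 ≤ ⨅ n, PP q γ n := le_ciInf fun n => (XL_pos hq γ n).le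
  rcases eq_or_lt_of_le hl0 with heq | hlt
  · rwa [← heq] at htend
  · exfalso
    set l := ⨅ n, PP q γ n with hldef
    have hmono : Monotone (fun n => SS (bq q) q γ n) := XA_mono hq γ
    have hbddA : BddAbove (Set.range fun n => SS (bq q) q γ n) := by
      refine ⟨1, ?_⟩
      rintro y ⟨n, rfl⟩
      have := XB_le_one hq hsum γ n
      have := (XL_pos hq γ n).le
      simp only
      linarith
    have htendA : Filter.Tendsto (fun n => SS (bq q) q γ n) Filter.atTop
        (nhds (⨆ n, SS (bq q) q γ n)) := tendsto_atTop_ciSup hmono hbddA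
    set a := ⨆ n, SS (bq q) q γ n with hadef
    have hA_le : ∀ n, SS (bq q) q γ n ≤ a := fun n => le_ciSup hbddA n
    have hl_le : ∀ n, l ≤ PP q γ n := fun n => ciInf_le hbdd n
    have hB_ge : ∀ n, a + l ≤ SS (bq q) q γ n + PP q γ n := by
      intro n
      have hts : Filter.Tendsto (fun m => SS (bq q) q γ m + PP q γ m) Filter.atTop
          (nhds (a + l)) := htendA.add htend
      apply le_of_tendsto hts
      filter_upwards [Filter.eventually_ge_atTop n] with m hm
      exact XB_anti hq hsum γ hm
    have ha0 : 0 ≤ a := by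
      have := hA_le 0
      have h0 := XA_zero (q := q) γ
      have := le_ciSup hbddA 0
      rw [h0] at this
      linarith
    have key : ∀ y : ℝ, a < y → y < a + l → α y = γ := by
      intro y hy1 hy2
      have hymem : y ∈ Set.Icc (0:ℝ) 1 := by
        constructor
        · linarith
        · have := hB_ge 0
          rw [XA_zero, XP_zero] at this
          linarith
      have hxv := hα y hymem
      funext j
      have hsep := sep hq hsum γ (α y) (j + 1)
        (by rw [hxv]; linarith [hA_le (j+1)])
        (by rw [hxv]; linarith [hB_ge (j+1)])
      exact hsep j (by omega)
    have h1 : α (a + l/3) = γ := key _ (by linarith) (by linarith)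
    have h2 : α (a + 2*l/3) = γ := key _ (by linarith) (by linarith)
    have hy1 : Xval q (α (a + l/3)) = a + l/3 := by
      apply hα
      constructor
      · linarith
      · have := hB_ge 0
        rw [XA_zero, XP_zero] at this
        linarith
    have hy2 : Xval q (α (a + 2*l/3)) = a + 2*l/3 := by
      apply hα
      constructor
      · linarith
      · have := hB_ge 0
        rw [XA_zero, XP_zero] at this
        linarith
    rw [h1] at hy1
    rw [h2] at hy2
    rw [hy1] at hy2
    linarith

lemma PP_split (w : Fin 3 → ℕ → ℝ) (γ : ℕ → Fin 3) (n k : ℕ) :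
    PP w γ (n + k) = PP w γ n * ∏ j ∈ Finset.range k, w (γ (n + j)) (n + j) := by
  unfold PP
  rw [Finset.prod_range_add]

lemma XT_one_of_digits (hq : ∀ i k, 0 < q i k) (hsum : ∀ k, q 0 k + q 1 k + q 2 k = 1)
    {α : ℝ → ℕ → Fin 3} (hα : ∀ x ∈ Set.Icc (0 : ℝ) 1, Xval q (α x) = x)
    (γ : ℕ → Fin 3) (n : ℕ) (h : ∀ m, n ≤ m → γ m = 2) :
    TT (bq q) q γ n = 1 := by
  have key : ∀ (k p : ℕ), (∀ m, p ≤ m → γ m = 2) →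
      |1 - TT (bq q) q γ p| ≤ ∏ j ∈ Finset.range k, q (γ (p + j)) (p + j) := by
    intro k
    induction k with
    | zero =>
      intro p _
      have h0 := XT_nonneg hq γ p
      have h1 := XT_le_one hq hsum γ p
      rw [Finset.prod_range_zero, abs_le]
      constructor <;> linarith
    | succ k ih =>
      intro p hp
      have hrec := XT_rec hq hsum γ p
      rw [hp p le_rfl, bq2_val] at hrec
      have hih := ih (p+1) (fun m hm => hp m (by omega))
      have hs := hsum p
      have heq : 1 - TT (bq q) q γ p = q 2 p * (1 - TT (bq q) q γ (p+1)) := by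
        rw [hrec]; ring_nf; nlinarith
      rw [prod_shift, hp p le_rfl, heq, abs_mul, abs_of_pos (hq 2 p)]
      exact mul_le_mul_of_nonneg_left hih (hq 2 p).le
  have hb : ∀ k : ℕ, |1 - TT (bq q) q γ n| ≤ PP q γ (k + n) / PP q γ n := by
    intro k
    have hk := key k n h
    rw [show k + n = n + k from by omega, PP_split]
    rw [mul_comm, mul_div_assoc, div_self (XL_pos hq γ n).ne', mul_one]
    exact hk
  have htend : Filter.Tendsto (fun k => PP q γ (k + n) / PP q γ n) Filter.atTop
      (nhds 0) := by
    have h1 := (shrink hq hsum hα γ).comp (Filter.tendsto_add_atTop_nat n)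
    have := h1.div_const (PP q γ n)
    simpa using this
  have hle : |1 - TT (bq q) q γ n| ≤ 0 := ge_of_tendsto' htend hb
  have h0 : |1 - TT (bq q) q γ n| = 0 := le_antisymm hle (abs_nonneg _)
  linarith [abs_eq_zero.mp h0]

/-! ### core estimate -/

lemma core_est (hε : ∀ k, 1 / 2 < ε k ∧ ε k ≤ 1) (γ γ' : ℕ → Fin 3) (n : ℕ)
    (h : ∀ j, j < n → γ' j = γ j) :
    |F ε γ' - F ε γ| ≤ (2/3 : ℝ) ^ n := by
  rw [F_decomp hε γ n, F_decomp hε γ' n,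
    SS_congr (dq ε) (gq ε) γ n h, PP_congr (gq ε) n h]
  have hd : SS (dq ε) (gq ε) γ n + PP (gq ε) γ n * TT (dq ε) (gq ε) γ' n -
      (SS (dq ε) (gq ε) γ n + PP (gq ε) γ n * TT (dq ε) (gq ε) γ n)
      = PP (gq ε) γ n * (TT (dq ε) (gq ε) γ' n - TT (dq ε) (gq ε) γ n) := by ring
  rw [hd, abs_mul]
  have h1 := FP_abs hε γ n
  have h2 : |TT (dq ε) (gq ε) γ' n - TT (dq ε) (gq ε) γ n| ≤ 1 := by
    have a1 := FT_nonneg hε γ' n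
    have a2 := FT_le_one hε γ' n
    have a3 := FT_nonneg hε γ n
    have a4 := FT_le_one hε γ n
    rw [abs_le]; constructor <;> linarith
  calc |PP (gq ε) γ n| * |TT (dq ε) (gq ε) γ' n - TT (dq ε) (gq ε) γ n|
      ≤ (2/3:ℝ)^n * 1 := mul_le_mul h1 h2 (abs_nonneg _) (by positivity)
    _ = (2/3:ℝ)^n := mul_one _

end Chunk4

section Chunk5
variable {q : Fin 3 → ℕ → ℝ} {ε : ℕ → ℝ}

lemma XT_zero_of_digits (hq : ∀ i k, 0 < q i k) (γ : ℕ → Fin 3) (n : ℕ)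
    (h : ∀ m, n ≤ m → γ m = 0) : TT (bq q) q γ n = 0 := by
  unfold TT
  have hz : ∀ k : ℕ, bq q (γ (n + k)) (n + k) *
      ∏ j ∈ Finset.range k, q (γ (n + j)) (n + j) = 0 := by
    intro k
    rw [h (n + k) (by omega), bq0_val, zero_mul]
  rw [tsum_congr hz, tsum_zero]

/-- evaluation at the 0/1 subcylinder boundary -/
lemma eval_q0 (hq : ∀ i k, 0 < q i k) (hsum : ∀ k, q 0 k + q 1 k + q 2 k = 1)
    (hε : ∀ k, 1 / 2 < ε k ∧ ε k ≤ 1)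
    {α : ℝ → ℕ → Fin 3} (hα : ∀ x ∈ Set.Icc (0 : ℝ) 1, Xval q (α x) = x)
    (γ : ℕ → Fin 3) (n : ℕ) (h : TT (bq q) q γ n = q 0 n) :
    TT (dq ε) (gq ε) γ n = gq ε 0 n := by
  have hrec := XT_rec hq hsum γ n
  have hfrec := FT_rec hε γ n
  have ht0 := XT_nonneg hq γ (n+1)
  have ht1 := XT_le_one hq hsum γ (n+1)
  have h0 := hq 0 n; have h1 := hq 1 n; have h2 := hq 2 n
  rcases fin3 (γ n) with hg|hg|hg
  · -- γ n = 0 : tail is all 2's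
    rw [hg, bq0_val, h] at hrec
    have hX1 : TT (bq q) q γ (n+1) = 1 := by
      have : q 0 n * TT (bq q) q γ (n+1) = q 0 n * 1 := by linarith
      exact mul_left_cancel₀ h0.ne' this
    have hd := XT_one_digits hq hsum γ (n+1) hX1
    have hF1 := FT_one_of_digits hε γ (n+1) hd
    rw [hfrec, hg, dq0_val, hF1, zero_add, mul_one]
  · -- γ n = 1 : tail is all 0's
    rw [hg, bq1_val, h] at hrec
    have hX0 : TT (bq q) q γ (n+1) = 0 := by nlinarith
    have hd := XT_zero_digits hq hsum γ (n+1) hX0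
    have hF0 := FT_zero_of_digits hε γ (n+1) hd
    rw [hfrec, hg, dq1_val, hF0, mul_zero, add_zero]
  · -- γ n = 2 : impossible
    exfalso
    rw [hg, bq2_val, h] at hrec
    nlinarith [mul_nonneg h2.le ht0]

/-- evaluation at the 1/2 subcylinder boundary -/
lemma eval_q01 (hq : ∀ i k, 0 < q i k) (hsum : ∀ k, q 0 k + q 1 k + q 2 k = 1)
    (hε : ∀ k, 1 / 2 < ε k ∧ ε k ≤ 1)
    {α : ℝ → ℕ → Fin 3} (hα : ∀ x ∈ Set.Icc (0 : ℝ) 1, Xval q (α x) = x)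
    (γ : ℕ → Fin 3) (n : ℕ) (h : TT (bq q) q γ n = q 0 n + q 1 n) :
    TT (dq ε) (gq ε) γ n = gq ε 0 n + gq ε 1 n := by
  have hrec := XT_rec hq hsum γ n
  have hfrec := FT_rec hε γ n
  have ht0 := XT_nonneg hq γ (n+1)
  have ht1 := XT_le_one hq hsum γ (n+1)
  have h0 := hq 0 n; have h1 := hq 1 n; have h2 := hq 2 n
  rcases fin3 (γ n) with hg|hg|hg
  · exfalso
    rw [hg, bq0_val, h] at hrec
    nlinarith [mul_le_mul_of_nonneg_left ht1 h0.le]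
  · rw [hg, bq1_val, h] at hrec
    have hX1 : TT (bq q) q γ (n+1) = 1 := by
      have : q 1 n * TT (bq q) q γ (n+1) = q 1 n * 1 := by linarith
      exact mul_left_cancel₀ h1.ne' this
    have hd := XT_one_digits hq hsum γ (n+1) hX1
    have hF1 := FT_one_of_digits hε γ (n+1) hd
    rw [hfrec, hg, dq1_val, hF1, mul_one]
  · rw [hg, bq2_val, h] at hrec
    have hX0 : TT (bq q) q γ (n+1) = 0 := by nlinarith
    have hd := XT_zero_digits hq hsum γ (n+1) hX0
    have hF0 := FT_zero_of_digits hε γ (n+1) hd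
    rw [hfrec, hg, dq2_val, hF0, mul_zero, add_zero]

/-- evaluation at the 0/1 boundary inside the 0 subcylinder -/
lemma eval_q00 (hq : ∀ i k, 0 < q i k) (hsum : ∀ k, q 0 k + q 1 k + q 2 k = 1)
    (hε : ∀ k, 1 / 2 < ε k ∧ ε k ≤ 1)
    {α : ℝ → ℕ → Fin 3} (hα : ∀ x ∈ Set.Icc (0 : ℝ) 1, Xval q (α x) = x)
    (γ : ℕ → Fin 3) (n : ℕ) (h : TT (bq q) q γ n = q 0 n * q 0 (n + 1)) :
    TT (dq ε) (gq ε) γ n = gq ε 0 n * gq ε 0 (n + 1) := by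
  have hrec := XT_rec hq hsum γ n
  have hfrec := FT_rec hε γ n
  have ht0 := XT_nonneg hq γ (n+1)
  have ht1 := XT_le_one hq hsum γ (n+1)
  have h0 := hq 0 n; have h1 := hq 1 n; have h2 := hq 2 n
  have h0' := hq 0 (n+1)
  have h0'lt := q_lt_one hq hsum 0 (n+1)
  rcases fin3 (γ n) with hg|hg|hg
  · rw [hg, bq0_val, h] at hrec
    have hX : TT (bq q) q γ (n+1) = q 0 (n+1) := by
      have : q 0 n * q 0 (n+1) = q 0 n * TT (bq q) q γ (n+1) := by linarith
      exact (mul_left_cancel₀ h0.ne' this).symm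
    have hF := eval_q0 hq hsum hε hα γ (n+1) hX
    rw [hfrec, hg, dq0_val, hF, zero_add]
  · exfalso
    rw [hg, bq1_val, h] at hrec
    nlinarith [mul_nonneg h1.le ht0, mul_lt_mul_of_pos_left h0'lt h0]
  · exfalso
    rw [hg, bq2_val, h] at hrec
    nlinarith [mul_nonneg h2.le ht0, mul_lt_mul_of_pos_left h0'lt h0]

end Chunk5

section Chunk6
variable {q : Fin 3 → ℕ → ℝ} {ε : ℕ → ℝ}

set_option maxHeartbeats 1000000 in
lemma partB (hq : ∀ i k, 0 < q i k) (hsum : ∀ k, q 0 k + q 1 k + q 2 k = 1)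
    (hε : ∀ k, 1 / 2 < ε k ∧ ε k ≤ 1)
    {α : ℝ → ℕ → Fin 3} (hα : ∀ x ∈ Set.Icc (0 : ℝ) 1, Xval q (α x) = x)
    (a b : ℝ) (ha : 0 ≤ a) (hab : a < b) (hb : b ≤ 1) :
    ¬ MonotoneOn (fun x => F ε (α x)) (Set.Ioo a b) ∧
    ¬ AntitoneOn (fun x => F ε (α x)) (Set.Ioo a b) := by
  set x : ℝ := (a + b) / 2 with hxdef
  have hxa : a < x := by rw [hxdef]; linarith
  have hxb : x < b := by rw [hxdef]; linarith
  have hxI : x ∈ Set.Icc (0:ℝ) 1 := ⟨by linarith, by linarith⟩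
  have hxv : Xval q (α x) = x := hα x hxI
  set β : ℕ → Fin 3 := α x with hβdef
  have hmin : (0:ℝ) < min (x - a) (b - x) := lt_min (by linarith) (by linarith)
  obtain ⟨n, hn⟩ := ((shrink hq hsum hα β).eventually_lt_const hmin).exists
  rw [lt_min_iff] at hn
  obtain ⟨hQa, hQb⟩ := hn
  have hQ : 0 < PP q β n := XL_pos hq β n
  have hPf : PP (gq ε) β n ≠ 0 := FP_ne_zero hε β n
  obtain ⟨hmc1, hmc2⟩ := mem_cyl hq hsum β n
  rw [hxv] at hmc1 hmc2
  have haA : a < SS (bq q) q β n := by linarith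
  have hAb : SS (bq q) q β n + PP q β n < b := by linarith
  have hA0 : 0 ≤ SS (bq q) q β n := XA_nonneg hq β n
  have hA1 : SS (bq q) q β n + PP q β n ≤ 1 := XB_le_one hq hsum β n
  -- generic point evaluation
  have key : ∀ c : ℝ, 0 < c → c < 1 →
      (SS (bq q) q β n + PP q β n * c ∈ Set.Ioo a b) ∧
      (SS (bq q) q β n + PP q β n * c ∈ Set.Icc (0:ℝ) 1) ∧
      TT (bq q) q (α (SS (bq q) q β n + PP q β n * c)) n = c ∧
      (∀ j, j < n → (α (SS (bq q) q β n + PP q β n * c)) j = β j) := by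
    intro c hc0 hc1
    have hQc0 : 0 < PP q β n * c := mul_pos hQ hc0
    have hQc1 : PP q β n * c < PP q β n := by nlinarith
    have hO : SS (bq q) q β n + PP q β n * c ∈ Set.Ioo a b :=
      ⟨by linarith, by linarith⟩
    have hI : SS (bq q) q β n + PP q β n * c ∈ Set.Icc (0:ℝ) 1 :=
      ⟨by linarith, by linarith⟩
    have hxt : Xval q (α (SS (bq q) q β n + PP q β n * c))
        = SS (bq q) q β n + PP q β n * c := hα _ hI
    have hsep := sep hq hsum β (α (SS (bq q) q β n + PP q β n * c)) n
      (by rw [hxt]; linarith) (by rw [hxt]; linarith)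
    refine ⟨hO, hI, ?_, hsep⟩
    have hd := Xval_decomp hq hsum (α (SS (bq q) q β n + PP q β n * c)) n
    rw [SS_congr (bq q) q β n hsep, PP_congr q n hsep, hxt] at hd
    have hcc : PP q β n * c = PP q β n *
        TT (bq q) q (α (SS (bq q) q β n + PP q β n * c)) n := by linarith
    exact (mul_left_cancel₀ hQ.ne' hcc).symm
  -- the three constants
  have hq0 := hq 0 n; have hq1 := hq 1 n; have hq2 := hq 2 n
  have hq0' := hq 0 (n+1)
  have hq0lt := q_lt_one hq hsum 0 n
  have hq0'lt := q_lt_one hq hsum 0 (n+1)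
  have hs := hsum n
  have hc1 : (0:ℝ) < q 0 n ∧ q 0 n < 1 := ⟨hq0, hq0lt⟩
  have hc2 : (0:ℝ) < q 0 n + q 1 n ∧ q 0 n + q 1 n < 1 := ⟨by linarith, by linarith⟩
  have hc0 : (0:ℝ) < q 0 n * q 0 (n+1) ∧ q 0 n * q 0 (n+1) < 1 :=
    ⟨mul_pos hq0 hq0', by nlinarith⟩
  obtain ⟨hO1, hI1, hXT1, hag1⟩ := key (q 0 n) hc1.1 hc1.2
  obtain ⟨hO2, hI2, hXT2, hag2⟩ := key (q 0 n + q 1 n) hc2.1 hc2.2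
  obtain ⟨hO0, hI0, hXT0, hag0⟩ := key (q 0 n * q 0 (n+1)) hc0.1 hc0.2
  have hFT1 := eval_q0 hq hsum hε hα _ n hXT1
  have hFT2 := eval_q01 hq hsum hε hα _ n hXT2
  have hFT0 := eval_q00 hq hsum hε hα _ n hXT0
  have hf1 : F ε (α (SS (bq q) q β n + PP q β n * q 0 n))
      = SS (dq ε) (gq ε) β n + PP (gq ε) β n * gq ε 0 n := by
    rw [F_decomp hε _ n, SS_congr (dq ε) (gq ε) β n hag1,
      PP_congr (gq ε) n hag1, hFT1]
  have hf2 : F ε (α (SS (bq q) q β n + PP q β n * (q 0 n + q 1 n)))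
      = SS (dq ε) (gq ε) β n + PP (gq ε) β n * (gq ε 0 n + gq ε 1 n) := by
    rw [F_decomp hε _ n, SS_congr (dq ε) (gq ε) β n hag2,
      PP_congr (gq ε) n hag2, hFT2]
  have hf0 : F ε (α (SS (bq q) q β n + PP q β n * (q 0 n * q 0 (n+1))))
      = SS (dq ε) (gq ε) β n + PP (gq ε) β n * (gq ε 0 n * gq ε 0 (n+1)) := by
    rw [F_decomp hε _ n, SS_congr (dq ε) (gq ε) β n hag0,
      PP_congr (gq ε) n hag0, hFT0]
  -- orderings
  have hord01 : SS (bq q) q β n + PP q β n * (q 0 n * q 0 (n+1))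
      < SS (bq q) q β n + PP q β n * q 0 n :=
    add_lt_add_right (mul_lt_mul_of_pos_left
      (mul_lt_of_lt_one_right hq0 hq0'lt) hQ) _
  have hord12 : SS (bq q) q β n + PP q β n * q 0 n
      < SS (bq q) q β n + PP q β n * (q 0 n + q 1 n) :=
    add_lt_add_right (mul_lt_mul_of_pos_left (lt_add_of_pos_right _ hq1) hQ) _
  have hg0 := g0_pos hε n
  have hg0' := g0_pos hε (n+1)
  have hg0'le := g0_le hε (n+1)
  have hg1 := g1_neg hε n
  constructor
  · intro hm
    rcases lt_or_gt_of_ne hPf with hPn | hPp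
    · have hle := hm hO0 hO1 hord01.le
      simp only [hf0, hf1] at hle
      have h1 : PP (gq ε) β n * (gq ε 0 n * (1 - gq ε 0 (n+1))) < 0 :=
        mul_neg_of_neg_of_pos hPn (mul_pos hg0 (by linarith))
      nlinarith [h1, hle]
    · have hle := hm hO1 hO2 hord12.le
      simp only [hf1, hf2] at hle
      have h1 : PP (gq ε) β n * gq ε 1 n < 0 := mul_neg_of_pos_of_neg hPp hg1
      nlinarith [h1, hle]
  · intro hm
    rcases lt_or_gt_of_ne hPf with hPn | hPp
    · have hle := hm hO1 hO2 hord12.le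
      simp only [hf1, hf2] at hle
      have h1 : 0 < PP (gq ε) β n * gq ε 1 n := mul_pos_of_neg_of_neg hPn hg1
      nlinarith [h1, hle]
    · have hle := hm hO0 hO1 hord01.le
      simp only [hf0, hf1] at hle
      have h1 : 0 < PP (gq ε) β n * (gq ε 0 n * (1 - gq ε 0 (n+1))) :=
        mul_pos hPp (mul_pos hg0 (by linarith))
      nlinarith [h1, hle]

end Chunk6

section Chunk7
variable {q : Fin 3 → ℕ → ℝ} {ε : ℕ → ℝ}

def succD (i : Fin 3) : Fin 3 := if i = 0 then 1 else 2
def predD (i : Fin 3) : Fin 3 := if i = 2 then 1 else 0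

def upSeq (β : ℕ → Fin 3) (r : ℕ) : ℕ → Fin 3 :=
  fun j => if j < r then β j else if j = r then succD (β r) else 0

def dnSeq (β : ℕ → Fin 3) (r : ℕ) : ℕ → Fin 3 :=
  fun j => if j < r then β j else if j = r then predD (β r) else 2

lemma upSeq_lt (β : ℕ → Fin 3) {r j : ℕ} (h : j < r) : upSeq β r j = β j := by
  unfold upSeq; rw [if_pos h]

lemma upSeq_eq (β : ℕ → Fin 3) (r : ℕ) : upSeq β r r = succD (β r) := by
  unfold upSeq; rw [if_neg (by omega), if_pos rfl]

lemma upSeq_gt (β : ℕ → Fin 3) {r j : ℕ} (h : r < j) : upSeq β r j = 0 := by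
  unfold upSeq; rw [if_neg (by omega), if_neg (by omega)]

lemma dnSeq_lt (β : ℕ → Fin 3) {r j : ℕ} (h : j < r) : dnSeq β r j = β j := by
  unfold dnSeq; rw [if_pos h]

lemma dnSeq_eq (β : ℕ → Fin 3) (r : ℕ) : dnSeq β r r = predD (β r) := by
  unfold dnSeq; rw [if_neg (by omega), if_pos rfl]

lemma dnSeq_gt (β : ℕ → Fin 3) {r j : ℕ} (h : r < j) : dnSeq β r j = 2 := by
  unfold dnSeq; rw [if_neg (by omega), if_neg (by omega)]

lemma bq_succD (i : Fin 3) (hi : i ≠ 2) (k : ℕ) :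
    bq q (succD i) k = bq q i k + q i k := by
  rcases fin3 i with rfl|rfl|rfl
  · show bq q 1 k = bq q 0 k + q 0 k
    rw [bq1_val, bq0_val]; ring
  · show bq q 2 k = bq q 1 k + q 1 k
    rw [bq2_val, bq1_val]
  · exact absurd rfl hi

lemma dq_succD (i : Fin 3) (hi : i ≠ 2) (k : ℕ) :
    dq ε (succD i) k = dq ε i k + gq ε i k := by
  rcases fin3 i with rfl|rfl|rfl
  · show dq ε 1 k = dq ε 0 k + gq ε 0 k
    rw [dq1_val, dq0_val]; ring
  · show dq ε 2 k = dq ε 1 k + gq ε 1 k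
    rw [dq2_val, dq1_val]
  · exact absurd rfl hi

lemma bq_predD (i : Fin 3) (hi : i ≠ 0) (k : ℕ) :
    bq q (predD i) k + q (predD i) k = bq q i k := by
  rcases fin3 i with rfl|rfl|rfl
  · exact absurd rfl hi
  · show bq q 0 k + q 0 k = bq q 1 k
    rw [bq1_val, bq0_val]; ring
  · show bq q 1 k + q 1 k = bq q 2 k
    rw [bq2_val, bq1_val]

lemma dq_predD (i : Fin 3) (hi : i ≠ 0) (k : ℕ) :
    dq ε (predD i) k + gq ε (predD i) k = dq ε i k := by
  rcases fin3 i with rfl|rfl|rfl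
  · exact absurd rfl hi
  · show dq ε 0 k + gq ε 0 k = dq ε 1 k
    rw [dq1_val, dq0_val]; ring
  · show dq ε 1 k + gq ε 1 k = dq ε 2 k
    rw [dq2_val, dq1_val]

lemma up_props (hq : ∀ i k, 0 < q i k) (hsum : ∀ k, q 0 k + q 1 k + q 2 k = 1)
    (hε : ∀ k, 1 / 2 < ε k ∧ ε k ≤ 1)
    {α : ℝ → ℕ → Fin 3} (hα : ∀ x ∈ Set.Icc (0 : ℝ) 1, Xval q (α x) = x)
    (β : ℕ → Fin 3) (r : ℕ) (hr2 : β r ≠ 2) (htail : ∀ m, r < m → β m = 2) :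
    Xval q (upSeq β r) = Xval q β ∧ F ε (upSeq β r) = F ε β ∧
      ∀ n, r < n → SS (bq q) q (upSeq β r) n = Xval q β := by
  have hag : ∀ j, j < r → upSeq β r j = β j := fun j hj => upSeq_lt β hj
  have htail0 : ∀ m, r < m → upSeq β r m = 0 := fun m hm => upSeq_gt β hm
  have hXTp : TT (bq q) q (upSeq β r) (r+1) = 0 :=
    XT_zero_of_digits hq _ (r+1) (fun m hm => htail0 m (by omega))
  have hFTp : TT (dq ε) (gq ε) (upSeq β r) (r+1) = 0 :=
    FT_zero_of_digits hε _ (r+1) (fun m hm => htail0 m (by omega))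
  have hXTb : TT (bq q) q β (r+1) = 1 :=
    XT_one_of_digits hq hsum hα β (r+1) (fun m hm => htail m (by omega))
  have hFTb : TT (dq ε) (gq ε) β (r+1) = 1 :=
    FT_one_of_digits hε β (r+1) (fun m hm => htail m (by omega))
  have hXp := Xval_decomp hq hsum (upSeq β r) (r+1)
  rw [hXTp, mul_zero, add_zero, SS_succ, SS_congr (bq q) q β r hag,
    PP_congr q r hag, upSeq_eq] at hXp
  have hXb := Xval_decomp hq hsum β (r+1)
  rw [hXTb, mul_one, SS_succ, PP_succ] at hXb
  have hXeq : Xval q (upSeq β r) = Xval q β := by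
    rw [hXp, hXb, bq_succD (β r) hr2]; ring
  have hFp := F_decomp hε (upSeq β r) (r+1)
  rw [hFTp, mul_zero, add_zero, SS_succ, SS_congr (dq ε) (gq ε) β r hag,
    PP_congr (gq ε) r hag, upSeq_eq] at hFp
  have hFb := F_decomp hε β (r+1)
  rw [hFTb, mul_one, SS_succ, PP_succ] at hFb
  have hFeq : F ε (upSeq β r) = F ε β := by
    rw [hFp, hFb, dq_succD (β r) hr2]; ring
  refine ⟨hXeq, hFeq, ?_⟩
  intro n hn
  have hXn := Xval_decomp hq hsum (upSeq β r) n
  rw [XT_zero_of_digits hq _ n (fun m hm => htail0 m (by omega)),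
    mul_zero, add_zero] at hXn
  exact hXn.symm.trans hXeq

lemma dn_props (hq : ∀ i k, 0 < q i k) (hsum : ∀ k, q 0 k + q 1 k + q 2 k = 1)
    (hε : ∀ k, 1 / 2 < ε k ∧ ε k ≤ 1)
    {α : ℝ → ℕ → Fin 3} (hα : ∀ x ∈ Set.Icc (0 : ℝ) 1, Xval q (α x) = x)
    (β : ℕ → Fin 3) (r : ℕ) (hr0 : β r ≠ 0) (htail : ∀ m, r < m → β m = 0) :
    Xval q (dnSeq β r) = Xval q β ∧ F ε (dnSeq β r) = F ε β ∧
      ∀ n, r < n → SS (bq q) q (dnSeq β r) n + PP q (dnSeq β r) n = Xval q β := by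
  have hag : ∀ j, j < r → dnSeq β r j = β j := fun j hj => dnSeq_lt β hj
  have htail2 : ∀ m, r < m → dnSeq β r m = 2 := fun m hm => dnSeq_gt β hm
  have hXTp : ∀ n, r < n → TT (bq q) q (dnSeq β r) n = 1 := fun n hn =>
    XT_one_of_digits hq hsum hα _ n (fun m hm => htail2 m (by omega))
  have hFTp : TT (dq ε) (gq ε) (dnSeq β r) (r+1) = 1 :=
    FT_one_of_digits hε _ (r+1) (fun m hm => htail2 m (by omega))
  have hXTb : TT (bq q) q β (r+1) = 0 :=
    XT_zero_of_digits hq β (r+1) (fun m hm => htail m (by omega))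
  have hFTb : TT (dq ε) (gq ε) β (r+1) = 0 :=
    FT_zero_of_digits hε β (r+1) (fun m hm => htail m (by omega))
  have hXp := Xval_decomp hq hsum (dnSeq β r) (r+1)
  rw [hXTp (r+1) (by omega), mul_one, SS_succ, PP_succ,
    SS_congr (bq q) q β r hag, PP_congr q r hag, dnSeq_eq] at hXp
  have hXb := Xval_decomp hq hsum β (r+1)
  rw [hXTb, mul_zero, add_zero, SS_succ] at hXb
  have hXeq : Xval q (dnSeq β r) = Xval q β := by
    rw [hXp, hXb, ← bq_predD (β r) hr0]; ring
  have hFp := F_decomp hε (dnSeq β r) (r+1)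
  rw [hFTp, mul_one, SS_succ, PP_succ, SS_congr (dq ε) (gq ε) β r hag,
    PP_congr (gq ε) r hag, dnSeq_eq] at hFp
  have hFb := F_decomp hε β (r+1)
  rw [hFTb, mul_zero, add_zero, SS_succ] at hFb
  have hFeq : F ε (dnSeq β r) = F ε β := by
    rw [hFp, hFb, ← dq_predD (β r) hr0]; ring
  refine ⟨hXeq, hFeq, ?_⟩
  intro n hn
  have hXn := Xval_decomp hq hsum (dnSeq β r) n
  rw [hXTp n hn, mul_one] at hXn
  exact hXn.symm.trans hXeq

lemma near_est (hq : ∀ i k, 0 < q i k) (hsum : ∀ k, q 0 k + q 1 k + q 2 k = 1)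
    (hε : ∀ k, 1 / 2 < ε k ∧ ε k ≤ 1)
    {α : ℝ → ℕ → Fin 3} (hα : ∀ x ∈ Set.Icc (0 : ℝ) 1, Xval q (α x) = x)
    (η : ℕ → Fin 3) (n : ℕ) (y : ℝ) (hyI : y ∈ Set.Icc (0:ℝ) 1)
    (h1 : SS (bq q) q η n < y) (h2 : y < SS (bq q) q η n + PP q η n) :
    |F ε (α y) - F ε η| ≤ (2/3 : ℝ) ^ n := by
  have hxv := hα y hyI
  have hsep := sep hq hsum η (α y) n (by rw [hxv]; exact h1) (by rw [hxv]; exact h2)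
  exact core_est hε η (α y) n hsep

end Chunk7

section Chunk8
variable {q : Fin 3 → ℕ → ℝ} {ε : ℕ → ℝ}

set_option maxHeartbeats 1000000 in
lemma partA (hq : ∀ i k, 0 < q i k) (hsum : ∀ k, q 0 k + q 1 k + q 2 k = 1)
    (hε : ∀ k, 1 / 2 < ε k ∧ ε k ≤ 1)
    {α : ℝ → ℕ → Fin 3} (hα : ∀ x ∈ Set.Icc (0 : ℝ) 1, Xval q (α x) = x) :
    ContinuousOn (fun x => F ε (α x)) (Set.Icc (0:ℝ) 1) := by
  rw [Metric.continuousOn_iff]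
  intro x hx ep hep
  obtain ⟨k, hk⟩ := exists_pow_lt_of_lt_one hep (by norm_num : (2/3:ℝ) < 1)
  have hxv : Xval q (α x) = x := hα x hx
  set β : ℕ → Fin 3 := α x with hβdef
  have hpow : ∀ n : ℕ, k ≤ n → ((2:ℝ)/3) ^ n < ep := fun n hn =>
    lt_of_le_of_lt (pow_le_pow_of_le_one (by norm_num) (by norm_num) hn) hk
  -- right-hand side
  have hR : ∃ δ > (0:ℝ), ∀ y ∈ Set.Icc (0:ℝ) 1, x < y → y - x < δ →
      |F ε (α y) - F ε β| < ep := by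
    by_cases hcase : TT (bq q) q β k < 1
    · refine ⟨SS (bq q) q β k + PP q β k - x, ?_, ?_⟩
      · have hd := Xval_decomp hq hsum β k
        rw [hxv] at hd
        have hQ := XL_pos hq β k
        nlinarith [mul_lt_mul_of_pos_left hcase hQ]
      · intro y hyI hxy hyd
        have h1 : SS (bq q) q β k < y := by
          have := (mem_cyl hq hsum β k).1
          rw [hxv] at this
          linarith
        have h2 : y < SS (bq q) q β k + PP q β k := by linarith
        exact lt_of_le_of_lt (near_est hq hsum hε hα β k y hyI h1 h2) hk
    · have hXT1 : TT (bq q) q β k = 1 :=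
        le_antisymm (XT_le_one hq hsum β k) (not_lt.mp hcase)
      have htail : ∀ m, k ≤ m → β m = 2 := XT_one_digits hq hsum β k hXT1
      by_cases hall : ∀ j, β j = 2
      · -- x = 1 : no point to the right
        have hx1 : x = 1 := by
          rw [← hxv, Xval_eq_TT]
          exact XT_one_of_digits hq hsum hα β 0 (fun m _ => hall m)
        exact ⟨1, one_pos, fun y hyI hxy _ => absurd hxy (by rw [hx1]; linarith [hyI.2])⟩
      · push_neg at hall
        obtain ⟨j0, hj0⟩ := hall
        have hj0k : j0 ≤ k := by
          by_contra hc
          exact hj0 (htail j0 (by omega))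
        set r := Nat.findGreatest (fun j => β j ≠ 2) k with hrdef
        have hrP : β r ≠ 2 := Nat.findGreatest_spec (P := fun j => β j ≠ 2) hj0k hj0
        have hrmax : ∀ m, r < m → β m = 2 := by
          intro m hm
          by_cases hmk : m ≤ k
          · have := Nat.findGreatest_is_greatest hm hmk
            simpa using this
          · exact htail m (by omega)
        obtain ⟨hXeq, hFeq, hSS⟩ := up_props hq hsum hε hα β r hrP hrmax
        set n := max k (r+1) with hndef
        have hSSn : SS (bq q) q (upSeq β r) n = x := by
          rw [hSS n (by omega), hxv]
        refine ⟨PP q (upSeq β r) n, XL_pos hq _ n, ?_⟩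
        intro y hyI hxy hyd
        have hest := near_est hq hsum hε hα (upSeq β r) n y hyI
          (by rw [hSSn]; exact hxy) (by rw [hSSn]; linarith)
        rw [hFeq] at hest
        exact lt_of_le_of_lt hest (hpow n (le_max_left _ _))
  -- left-hand side
  have hL : ∃ δ > (0:ℝ), ∀ y ∈ Set.Icc (0:ℝ) 1, y < x → x - y < δ →
      |F ε (α y) - F ε β| < ep := by
    by_cases hcase : 0 < TT (bq q) q β k
    · refine ⟨x - SS (bq q) q β k, ?_, ?_⟩
      · have hd := Xval_decomp hq hsum β k
        rw [hxv] at hd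
        have hQ := XL_pos hq β k
        nlinarith [mul_pos hQ hcase]
      · intro y hyI hxy hyd
        have h2 : y < SS (bq q) q β k + PP q β k := by
          have := (mem_cyl hq hsum β k).2
          rw [hxv] at this
          linarith
        have h1 : SS (bq q) q β k < y := by linarith
        exact lt_of_le_of_lt (near_est hq hsum hε hα β k y hyI h1 h2) hk
    · have hXT0 : TT (bq q) q β k = 0 :=
        le_antisymm (not_lt.mp hcase) (XT_nonneg hq β k)
      have htail : ∀ m, k ≤ m → β m = 0 := XT_zero_digits hq hsum β k hXT0
      by_cases hall : ∀ j, β j = 0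
      · have hx0 : x = 0 := by
          rw [← hxv, Xval_eq_TT]
          exact XT_zero_of_digits hq β 0 (fun m _ => hall m)
        exact ⟨1, one_pos, fun y hyI hxy _ => absurd hxy (by rw [hx0]; linarith [hyI.1])⟩
      · push_neg at hall
        obtain ⟨j0, hj0⟩ := hall
        have hj0k : j0 ≤ k := by
          by_contra hc
          exact hj0 (htail j0 (by omega))
        set r := Nat.findGreatest (fun j => β j ≠ 0) k with hrdef
        have hrP : β r ≠ 0 := Nat.findGreatest_spec (P := fun j => β j ≠ 0) hj0k hj0
        have hrmax : ∀ m, r < m → β m = 0 := by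
          intro m hm
          by_cases hmk : m ≤ k
          · have := Nat.findGreatest_is_greatest hm hmk
            simpa using this
          · exact htail m (by omega)
        obtain ⟨hXeq, hFeq, hSS⟩ := dn_props hq hsum hε hα β r hrP hrmax
        set n := max k (r+1) with hndef
        have hSSn : SS (bq q) q (dnSeq β r) n + PP q (dnSeq β r) n = x := by
          rw [hSS n (by omega), hxv]
        refine ⟨PP q (dnSeq β r) n, XL_pos hq _ n, ?_⟩
        intro y hyI hxy hyd
        have hest := near_est hq hsum hε hα (dnSeq β r) n y hyI
          (by linarith) (by rw [hSSn]; exact hxy)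
        rw [hFeq] at hest
        exact lt_of_le_of_lt hest (hpow n (le_max_left _ _))
  obtain ⟨δ1, hδ1, hR'⟩ := hR
  obtain ⟨δ2, hδ2, hL'⟩ := hL
  refine ⟨min δ1 δ2, lt_min hδ1 hδ2, ?_⟩
  intro y hyI hyd
  rw [Real.dist_eq] at hyd
  rw [Real.dist_eq]
  rcases lt_trichotomy y x with hlt | heq | hgt
  · have : x - y < δ2 := by
      rw [abs_sub_lt_iff] at hyd
      exact lt_of_lt_of_le hyd.2 (min_le_right _ _)
    exact hL' y hyI hlt this
  · rw [heq, ← hβdef, sub_self, abs_zero]; exact hep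
  · have : y - x < δ1 := by
      rw [abs_sub_lt_iff] at hyd
      exact lt_of_lt_of_le hyd.1 (min_le_left _ _)
    exact hR' y hyI hgt this

end Chunk8

end NM12

theorem stmt12 (q : Fin 3 → ℕ → ℝ) (hq : ∀ i k, 0 < q i k)
    (hsum : ∀ k, q 0 k + q 1 k + q 2 k = 1)
    (ε : ℕ → ℝ) (hε : ∀ k, 1 / 2 < ε k ∧ ε k ≤ 1)
    (α : ℝ → ℕ → Fin 3) (hα : ∀ x ∈ Set.Icc (0 : ℝ) 1, Xval q (α x) = x) :
    ContinuousOn (fun x => F ε (α x)) (Set.Icc (0 : ℝ) 1) ∧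
    ∀ a b : ℝ, 0 ≤ a → a < b → b ≤ 1 →
      ¬ MonotoneOn (fun x => F ε (α x)) (Set.Ioo a b) ∧
      ¬ AntitoneOn (fun x => F ε (α x)) (Set.Ioo a b) := by
  constructor
  · exact NM12.partA hq hsum hε hα
  · intro a b ha hab hb
    exact NM12.partB hq hsum hε hα a b ha hab hb
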